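/- For every n ∈ ℕ, with ω = (−1 + √−3)/2 ∈ ℂ a primitive cube root of unity, one has a_n = Σ_{k=0}^{n} C(n,k)^3 · (−ω)^{2k−n}, and the same identity holds with ω replaced by its complex conjugate ω̄. -/

import Mathlib

open Finset Nat

/-- `ω = (-1 + √-3)/2`, a primitive cube root of unity. -/
noncomputable def omegaC : ℂ := (-1 + Real.sqrt 3 * Complex.I) / 2

/-- The sequence `a_n = ∑_{k=0}^n C(n,k) C(n-k,k) C(n+k,k)`. -/
def seqA (n : ℕ) : ℕ :=
  ∑ k ∈ Finset.range (n + 1), Nat.choose n k * Nat.choose (n - k) k * Nat.choose (n + k) k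

private lemma chain1 {n k j : ℕ} (hj : j ≤ k) (hk : k ≤ n) :
    n.choose k * k.choose j = n.choose j * (n - j).choose (k - j) := by
  have h1 : j ≤ n := hj.trans hk
  have h2 : k - j ≤ n - j := by omega
  have f : ∀ m : ℕ, (m ! : ℚ) ≠ 0 := fun m => Nat.cast_ne_zero.mpr m.factorial_ne_zero
  have key : ((n.choose k * k.choose j : ℕ) : ℚ) = ((n.choose j * (n - j).choose (k - j) : ℕ) : ℚ) := by
    push_cast
    rw [Nat.cast_choose ℚ hk, Nat.cast_choose ℚ hj, Nat.cast_choose ℚ h1, Nat.cast_choose ℚ h2]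
    rw [show n - j - (k - j) = n - k from by omega]
    field_simp
  exact_mod_cast key

private lemma trinomial_swap (a b c : ℕ) (h : b + c ≤ a) :
    a.choose b * (a - b).choose c = a.choose c * (a - c).choose b := by
  have hb : b ≤ a := by omega
  have hc : c ≤ a := by omega
  have hcb : c ≤ a - b := by omega
  have hbc : b ≤ a - c := by omega
  have key : ((a.choose b * (a - b).choose c : ℕ) : ℚ) = ((a.choose c * (a - c).choose b : ℕ) : ℚ) := by
    push_cast
    rw [Nat.cast_choose ℚ hb, Nat.cast_choose ℚ hc, Nat.cast_choose ℚ hcb, Nat.cast_choose ℚ hbc]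
    rw [show a - b - c = a - c - b from by omega]
    field_simp
  exact_mod_cast key

private lemma term_eq {n k j : ℕ} (hj : j ≤ k) (hk : k ≤ n) :
    n.choose k * (k.choose j * (n - k).choose j)
      = n.choose j * ((n - j).choose j * (n - 2 * j).choose (k - j)) := by
  by_cases hnk : j ≤ n - k
  · rw [show n.choose k * (k.choose j * (n - k).choose j)
        = (n.choose k * k.choose j) * (n - k).choose j from by ring, chain1 hj hk]
    have h := trinomial_swap (n - j) (k - j) j (by omega)
    rw [show n - k = n - j - (k - j) from by omega, mul_assoc, h,
      show n - j - j = n - 2 * j from by omega]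
  · have h0 : (n - k).choose j = 0 := Nat.choose_eq_zero_of_lt (by omega)
    rw [h0, mul_zero, mul_zero]
    by_cases h2j : 2 * j ≤ n
    · rw [Nat.choose_eq_zero_of_lt (show n - 2 * j < k - j from by omega), mul_zero, mul_zero]
    · rw [Nat.choose_eq_zero_of_lt (show n - j < j from by omega), zero_mul, mul_zero]

private lemma certT (p q j : ℕ) :
    (q+1)^3 * (p+q+1) * (p.choose j * (q+1).choose j * (p+q+1+j).choose j)
      + (p+2*q+2) * (j+1)^3 * (p.choose (j+1) * (q+1).choose (j+1) * (p+q+(j+1)).choose (j+1))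
    = (q+1) * (p+q+1)^3 * (p.choose j * q.choose j * (p+q+j).choose j)
      + (p+2*q+2) * j^3 * (p.choose j * (q+1).choose j * (p+q+j).choose j) := by
  rw [show p+q+(j+1) = p+q+1+j from by omega]
  have h1 : q.choose j * (q+1) = (q+1).choose j * (q+1-j) := Nat.choose_mul_succ_eq q j
  have h2 : (p+q+j).choose j * (p+q+1+j) = (p+q+1+j).choose j * (p+q+1) := by
    have h := Nat.choose_mul_succ_eq (p+q+j) j
    rw [show p+q+j+1 - j = p+q+1 from by omega] at h
    rw [show p+q+j+1 = p+q+1+j from by omega] at h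
    exact h
  have h3 : p.choose (j+1) * (j+1) = p.choose j * (p - j) := Nat.choose_succ_right_eq p j
  have h4 : (q+1).choose (j+1) * (j+1) = (q+1).choose j * (q+1-j) :=
    Nat.choose_succ_right_eq (q+1) j
  have h5 : (p+q+1+j).choose (j+1) * (j+1) = (p+q+1+j).choose j * (p+q+1) := by
    have h := Nat.choose_succ_right_eq (p+q+1+j) j
    rw [show p+q+1+j - j = p+q+1 from by omega] at h
    exact h
  rcases Nat.lt_or_ge p j with hp | hp
  · rw [Nat.choose_eq_zero_of_lt hp, Nat.choose_eq_zero_of_lt (show p < j+1 by omega)]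
    ring
  rcases Nat.lt_or_ge (q+1) j with hq | hq
  · rw [Nat.choose_eq_zero_of_lt hq, Nat.choose_eq_zero_of_lt (show q < j by omega),
      Nat.choose_eq_zero_of_lt (show q+1 < j+1 by omega)]
    ring
  refine Nat.eq_of_mul_eq_mul_left (show 0 < p+q+j+1 from by omega) ?_
  zify [hp, hq] at h1 h2 h3 h4 h5 ⊢
  linear_combination
    (((p:ℤ)+2*q+2)*((p:ℤ)+q+j+1)*((j:ℤ)+1)^2*((q+1).choose (j+1):ℤ)*(((p+q+1+j).choose (j+1):ℤ))) * h3
    + (((p:ℤ)+2*q+2)*((p:ℤ)+q+j+1)*((p.choose j:ℤ))*((p:ℤ)-j)*((j:ℤ)+1)*(((p+q+1+j).choose (j+1):ℤ))) * h4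
    + (((p:ℤ)+2*q+2)*((p:ℤ)+q+j+1)*((p.choose j:ℤ))*((p:ℤ)-j)*(((q+1).choose j:ℤ))*((q:ℤ)+1-j)) * h5
    - (((p:ℤ)+q+1)^3*((p.choose j:ℤ))*(((p+q+j).choose j:ℤ))*((p:ℤ)+q+j+1)) * h1
    - (((p:ℤ)+q+1)^3*((p.choose j:ℤ))*(((q+1).choose j:ℤ))*((q:ℤ)+1-j)) * h2
    - (((p:ℤ)+2*q+2)*(j:ℤ)^3*((p.choose j:ℤ))*(((q+1).choose j:ℤ))) * h2

private lemma suranyi (p q : ℕ) :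
    ∑ j ∈ range (p+1), p.choose j * q.choose j * (p+q+j).choose j = ((p+q).choose p)^2 := by
  induction q with
  | zero =>
    rw [Finset.sum_eq_single 0]
    · simp
    · intro j _ hj0
      rw [Nat.choose_eq_zero_of_lt (show 0 < j from Nat.pos_of_ne_zero hj0)]
      ring
    · intro h; simp at h
  | succ q ih =>
    -- telescoping of H
    set H : ℕ → ℕ := fun i => (p+2*q+2) * i^3 * (p.choose i * (q+1).choose i * (p+q+i).choose i)
      with hH
    have h0 : H 0 = 0 := by simp [hH]
    have hp1 : H (p+1) = 0 := by simp [hH, Nat.choose_succ_self]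
    have tel : ∑ j ∈ range (p+1), H (j+1) = ∑ j ∈ range (p+1), H j := by
      have e1 := Finset.sum_range_succ' H (p+1)
      have e2 := Finset.sum_range_succ H (p+1)
      omega
    have sum_eq : ∑ j ∈ range (p+1),
          ((q+1)^3 * (p+q+1) * (p.choose j * (q+1).choose j * (p+q+1+j).choose j) + H (j+1))
        = ∑ j ∈ range (p+1),
          ((q+1) * (p+q+1)^3 * (p.choose j * q.choose j * (p+q+j).choose j) + H j) := by
      refine Finset.sum_congr rfl fun j _ => ?_
      have := certT p q j
      simp only [hH]
      omega
    rw [Finset.sum_add_distrib, Finset.sum_add_distrib, tel] at sum_eq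
    have main : (q+1)^3 * (p+q+1) * (∑ j ∈ range (p+1),
          p.choose j * (q+1).choose j * (p+q+1+j).choose j)
        = (q+1) * (p+q+1)^3 * (∑ j ∈ range (p+1),
          p.choose j * q.choose j * (p+q+j).choose j) := by
      rw [Finset.mul_sum, Finset.mul_sum]
      omega
    rw [ih] at main
    have habs : (p+q).choose p * (p+q+1) = (p+q+1).choose p * (q+1) := by
      have h := Nat.choose_mul_succ_eq (p+q) p
      rw [show p+q+1-p = q+1 from by omega] at h
      exact h
    have goal2 : (q+1)^3 * (p+q+1) * (∑ j ∈ range (p+1),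
          p.choose j * (q+1).choose j * (p+q+1+j).choose j)
        = (q+1)^3 * (p+q+1) * ((p+q+1).choose p)^2 := by
      rw [main]
      have hsq : ((p+q).choose p * (p+q+1))^2 = ((p+q+1).choose p * (q+1))^2 := by rw [habs]
      zify at hsq ⊢
      linear_combination ((q:ℤ)+1)*((p:ℤ)+q+1)*hsq
    have := Nat.eq_of_mul_eq_mul_left (show 0 < (q+1)^3 * (p+q+1) from by positivity) goal2
    simp only [show ∀ j : ℕ, p+(q+1)+j = p+q+1+j from fun j => by omega,
      show p+(q+1) = p+q+1 from by omega]
    exact this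

private lemma cube {n k : ℕ} (hk : k ≤ n) :
    (n.choose k)^3 = ∑ j ∈ range (k+1),
      n.choose j * (n - j).choose j * (n + j).choose j * (n - 2*j).choose (k - j) := by
  have hs := suranyi k (n - k)
  rw [Nat.add_sub_cancel' hk] at hs
  calc (n.choose k)^3 = n.choose k * ((n.choose k)^2) := by ring
    _ = n.choose k * ∑ j ∈ range (k+1), k.choose j * (n-k).choose j * (n+j).choose j := by
        rw [hs]
    _ = ∑ j ∈ range (k+1), n.choose k * (k.choose j * (n-k).choose j) * (n+j).choose j := by
        rw [Finset.mul_sum]; exact Finset.sum_congr rfl fun j _ => by ring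
    _ = ∑ j ∈ range (k+1),
          n.choose j * ((n-j).choose j * (n-2*j).choose (k-j)) * (n+j).choose j := by
        refine Finset.sum_congr rfl fun j hj => ?_
        rw [term_eq (Nat.lt_succ_iff.mp (Finset.mem_range.mp hj)) hk]
    _ = ∑ j ∈ range (k+1),
          n.choose j * (n-j).choose j * (n+j).choose j * (n-2*j).choose (k-j) := by
        exact Finset.sum_congr rfl fun j _ => by ring

private lemma main_id (ζ : ℂ) (hζ : ζ^2 + 1 = ζ) (n : ℕ) :
    (seqA n : ℂ) = ∑ k ∈ Finset.range (n + 1),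
      (Nat.choose n k : ℂ) ^ 3 * ζ ^ ((2 * k : ℤ) - n) := by
  have hne : ζ ≠ 0 := by
    intro h; rw [h] at hζ; norm_num at hζ
  -- expand cubes and swap summation order
  have step1 : ∑ k ∈ Finset.range (n + 1), (Nat.choose n k : ℂ) ^ 3 * ζ ^ ((2 * k : ℤ) - n)
      = ∑ k ∈ Finset.range (n + 1), ∑ j ∈ Finset.range (k + 1),
        ((n.choose j * (n - j).choose j * (n + j).choose j * (n - 2*j).choose (k - j) : ℕ) : ℂ)
          * ζ ^ ((2 * k : ℤ) - n) := by
    refine Finset.sum_congr rfl fun k hk => ?_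
    rw [← Finset.sum_mul]
    congr 1
    rw [← Nat.cast_sum, ← cube (Nat.lt_succ_iff.mp (Finset.mem_range.mp hk))]
    push_cast
    ring
  have step2 : ∑ k ∈ Finset.range (n + 1), ∑ j ∈ Finset.range (k + 1),
        ((n.choose j * (n - j).choose j * (n + j).choose j * (n - 2*j).choose (k - j) : ℕ) : ℂ)
          * ζ ^ ((2 * k : ℤ) - n)
      = ∑ j ∈ Finset.range (n + 1), ∑ k ∈ Finset.Ico j (n + 1),
        ((n.choose j * (n - j).choose j * (n + j).choose j * (n - 2*j).choose (k - j) : ℕ) : ℂ)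
          * ζ ^ ((2 * k : ℤ) - n) := by
    simp only [Finset.range_eq_Ico]
    exact (Finset.sum_Ico_Ico_comm 0 (n+1) _).symm
  have inner : ∀ j ∈ Finset.range (n + 1),
      (∑ k ∈ Finset.Ico j (n + 1),
        ((n.choose j * (n - j).choose j * (n + j).choose j * (n - 2*j).choose (k - j) : ℕ) : ℂ)
          * ζ ^ ((2 * k : ℤ) - n))
      = ((n.choose j * (n - j).choose j * (n + j).choose j : ℕ) : ℂ) := by
    intro j hj
    have hjn : j ≤ n := Nat.lt_succ_iff.mp (Finset.mem_range.mp hj)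
    rw [Finset.sum_Ico_eq_sum_range]
    by_cases h2j : 2*j ≤ n
    · have key : ∀ i ∈ Finset.range (n + 1 - j),
          ((n.choose j * (n - j).choose j * (n + j).choose j * (n - 2*j).choose (j + i - j) : ℕ) : ℂ)
            * ζ ^ (2 * ((j + i : ℕ) : ℤ) - n)
          = ((n.choose j * (n - j).choose j * (n + j).choose j : ℕ) : ℂ) * ζ ^ ((2 * j : ℤ) - n)
            * (((n - 2*j).choose i : ℂ) * (ζ^2)^i) := by
        intro i _
        rw [show j + i - j = i from by omega,
          show 2 * ((j + i : ℕ) : ℤ) - n = ((2 * j : ℤ) - n) + ((2*i : ℕ) : ℤ) from by push_cast; ring,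
          zpow_add₀ hne, zpow_natCast, pow_mul]
        push_cast
        ring
      rw [Finset.sum_congr rfl key, ← Finset.mul_sum]
      have hext : ∑ i ∈ Finset.range (n + 1 - j), ((n - 2*j).choose i : ℂ) * (ζ^2)^i
          = ∑ i ∈ Finset.range (n - 2*j + 1), ((n - 2*j).choose i : ℂ) * (ζ^2)^i := by
        refine (Finset.sum_subset (Finset.range_subset_range.mpr (by omega)) fun i _ hi => ?_).symm
        rw [Nat.choose_eq_zero_of_lt (by simpa using hi)]
        simp
      have hpow : ∑ i ∈ Finset.range (n - 2*j + 1), ((n - 2*j).choose i : ℂ) * (ζ^2)^i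
          = ζ ^ (n - 2*j) := by
        have h := add_pow (ζ^2) 1 (n - 2*j)
        rw [hζ] at h
        rw [h]
        exact Finset.sum_congr rfl fun i _ => by ring
      rw [hext, hpow, mul_assoc, ← zpow_natCast ζ (n - 2*j), ← zpow_add₀ hne,
        show (2 * (j:ℤ) - n) + ((n - 2*j : ℕ) : ℤ) = 0 from by omega, zpow_zero, mul_one]
    · have hz : (n - j).choose j = 0 := Nat.choose_eq_zero_of_lt (by omega)
      simp [hz]
  rw [step1, step2, Finset.sum_congr rfl inner, seqA]
  push_cast
  ring

private lemma omega_rel : omegaC ^ 2 + omegaC + 1 = 0 := by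
  have hs : (Real.sqrt 3 : ℂ) ^ 2 = 3 := by
    rw [← Complex.ofReal_pow, Real.sq_sqrt (by norm_num : (0:ℝ) ≤ 3)]
    norm_num
  unfold omegaC
  linear_combination (Complex.I ^ 2 / 4) * hs + (3 / 4) * Complex.I_sq

theorem seqA_omega_representation (n : ℕ) :
    ((seqA n : ℂ)
        = ∑ k ∈ Finset.range (n + 1), (Nat.choose n k : ℂ) ^ 3
            * (-omegaC) ^ ((2 * k : ℤ) - n)) ∧
    ((seqA n : ℂ)
        = ∑ k ∈ Finset.range (n + 1), (Nat.choose n k : ℂ) ^ 3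
            * (-(starRingEnd ℂ omegaC)) ^ ((2 * k : ℤ) - n)) := by
  have hω := omega_rel
  have hc : (starRingEnd ℂ omegaC) ^ 2 + (starRingEnd ℂ omegaC) + 1 = 0 := by
    have h := congrArg (starRingEnd ℂ) hω
    simpa using h
  constructor
  · exact main_id (-omegaC) (by linear_combination hω) n
  · exact main_id (-(starRingEnd ℂ omegaC)) (by linear_combination hc) n
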